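/- Let γ > 0 and let p, q ∈ L¹(ℝ) vanish outside [0,γ]. Then for every k ∈ ℂ and all f₁, f₂ ∈ L²(ℝ): |∫_ℝ e^{−ikx}·( ik·|2p(x)|^{1/2} f₁(x) + |q(x)|^{1/2} f₂(x) ) dx|² ≤ e^{2γ·(Im k)₊} · (2|k|²‖p‖₁ + ‖q‖₁) · (‖f₁‖₂² + ‖f₂‖₂²), where (a)₊ := max(a,0). -/

import Mathlib

open Complex MeasureTheory
open scoped ENNReal

lemma aux_integrable_mul {g f : ℝ → ℂ} (hg : MemLp g 2 (volume : Measure ℝ))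
    (hf : MemLp f 2 (volume : Measure ℝ)) : Integrable (fun x => g x * f x) := by
  rw [← memLp_one_iff_integrable]
  refine ⟨hg.1.mul hf.1, ?_⟩
  calc eLpNorm (fun x => g x * f x) 1 volume
      ≤ eLpNorm g 2 volume * eLpNorm f 2 volume := by
        haveI : ENNReal.HolderTriple 2 2 1 := ⟨by simp [ENNReal.inv_two_add_inv_two]⟩
        simpa using eLpNorm_le_eLpNorm_mul_eLpNorm'_of_norm hg.1 hf.1 (· * ·) 1
          (Filter.Eventually.of_forall fun x => by simp [norm_mul])
    _ < ⊤ := ENNReal.mul_lt_top hg.2 hf.2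

lemma aux_sq_eLpNorm {f : ℝ → ℂ} (hf : MemLp f 2 (volume : Measure ℝ)) :
    (eLpNorm f 2 volume).toReal ^ 2 = ∫ x, ‖f x‖ ^ 2 := by
  rw [hf.eLpNorm_eq_integral_rpow_norm two_ne_zero ENNReal.ofNat_ne_top]
  simp only [ENNReal.toReal_ofNat, Real.rpow_two]
  have h : (0:ℝ) ≤ ∫ a, ‖f a‖ ^ 2 := by positivity
  rw [ENNReal.toReal_ofReal (by positivity), ← Real.rpow_natCast _ 2, ← Real.rpow_mul h]
  norm_num

lemma aux_holder {g f : ℝ → ℂ} (hg : MemLp g 2 (volume : Measure ℝ))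
    (hf : MemLp f 2 (volume : Measure ℝ)) :
    ‖∫ x, g x * f x‖ ^ 2 ≤ (∫ x, ‖g x‖ ^ 2) * ∫ x, ‖f x‖ ^ 2 := by
  have h1 : ‖∫ x, g x * f x‖ ≤ ∫ x, ‖g x‖ * ‖f x‖ := by
    refine (norm_integral_le_integral_norm _).trans (le_of_eq ?_)
    simp [norm_mul]
  have hpq : (2:ℝ).HolderConjugate 2 := ⟨by norm_num, by norm_num, by norm_num⟩
  have hg2 : MemLp g (ENNReal.ofReal 2) volume := by simpa [ENNReal.ofReal_ofNat] using hg
  have hf2 : MemLp f (ENNReal.ofReal 2) volume := by simpa [ENNReal.ofReal_ofNat] using hf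
  have h2 := integral_mul_norm_le_Lp_mul_Lq hpq hg2 hf2
  simp only [Real.rpow_two] at h2
  have hA : (0:ℝ) ≤ ∫ a, ‖g a‖ ^ 2 := by positivity
  have hB : (0:ℝ) ≤ ∫ a, ‖f a‖ ^ 2 := by positivity
  calc ‖∫ x, g x * f x‖ ^ 2 ≤ (∫ x, ‖g x‖ * ‖f x‖) ^ 2 :=
        pow_le_pow_left₀ (norm_nonneg _) h1 2
    _ ≤ ((∫ a, ‖g a‖ ^ 2) ^ (1/(2:ℝ)) * (∫ a, ‖f a‖ ^ 2) ^ (1/(2:ℝ))) ^ 2 :=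
        pow_le_pow_left₀ (integral_nonneg fun x => by positivity) h2 2
    _ = (∫ x, ‖g x‖ ^ 2) * ∫ x, ‖f x‖ ^ 2 := by
        rw [mul_pow, ← Real.rpow_natCast ((∫ a, ‖g a‖ ^ 2) ^ (1/(2:ℝ))) 2,
          ← Real.rpow_natCast ((∫ a, ‖f a‖ ^ 2) ^ (1/(2:ℝ))) 2,
          ← Real.rpow_mul hA, ← Real.rpow_mul hB]
        norm_num [Real.rpow_one]

/-- If `‖g x‖² ≤ C x` pointwise with `C` integrable and `g` a.e. strongly measurable,
then `g ∈ L²` and `∫ ‖g‖² ≤ ∫ C`. -/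
lemma aux_memL2 {g : ℝ → ℂ} {C : ℝ → ℝ} (hC : Integrable C)
    (hb : ∀ x, ‖g x‖ ^ 2 ≤ C x) (hm : AEStronglyMeasurable g volume) :
    MemLp g 2 (volume : Measure ℝ) ∧ (∫ x, ‖g x‖ ^ 2) ≤ ∫ x, C x := by
  have hmsq : AEStronglyMeasurable (fun x => ‖g x‖ ^ 2) volume := by
    have := hm.norm.mul hm.norm
    simpa [← sq, Pi.pow_def] using this
  have hint : Integrable (fun x => ‖g x‖ ^ 2) volume :=
    hC.mono' hmsq (Filter.Eventually.of_forall fun x => by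
      rw [Real.norm_of_nonneg (by positivity)]; exact hb x)
  exact ⟨(memLp_two_iff_integrable_sq_norm hm).2 hint,
    integral_mono hint hC hb⟩

/-- Let `p, q ∈ L¹(ℝ)` vanish outside `[0,γ]`. Then for every `k ∈ ℂ` and `f₁, f₂ ∈ L²(ℝ)`:
`|∫ e^{−ikx}(ik|2p|^{1/2}f₁ + |q|^{1/2}f₂)dx|² ≤ e^{2γ(Im k)₊}(2|k|²‖p‖₁+‖q‖₁)(‖f₁‖₂²+‖f₂‖₂²)`. -/
theorem psi_operator_bound (γ : ℝ) (hγ : 0 < γ) (p q : ℝ → ℝ)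
    (hp : Integrable p) (hq : Integrable q)
    (hps : ∀ x : ℝ, x ∉ Set.Icc 0 γ → p x = 0)
    (hqs : ∀ x : ℝ, x ∉ Set.Icc 0 γ → q x = 0)
    (k : ℂ) (f₁ f₂ : ℝ → ℂ)
    (hf₁ : MemLp f₁ 2 (volume : Measure ℝ)) (hf₂ : MemLp f₂ 2 (volume : Measure ℝ)) :
    ‖∫ x : ℝ, Complex.exp (-(Complex.I * k * x)) *
        (Complex.I * k * (Real.sqrt |2 * p x| : ℂ) * f₁ x
          + (Real.sqrt |q x| : ℂ) * f₂ x)‖ ^ 2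
      ≤ Real.exp (2 * γ * max k.im 0) *
          (2 * ‖k‖ ^ 2 * (∫ x : ℝ, |p x|) + ∫ x : ℝ, |q x|) *
          ((eLpNorm f₁ 2 volume).toReal ^ 2 + (eLpNorm f₂ 2 volume).toReal ^ 2) := by
  set A := Real.exp (γ * max k.im 0) with hA
  have hA0 : 0 < A := Real.exp_pos _
  set g₁ : ℝ → ℂ := fun x => Complex.exp (-(Complex.I * k * x)) *
      (Complex.I * k * (Real.sqrt |2 * p x| : ℂ)) with hg₁
  set g₂ : ℝ → ℂ := fun x => Complex.exp (-(Complex.I * k * x)) *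
      (Real.sqrt |q x| : ℂ) with hg₂
  -- measurability
  have hexp : Continuous fun x : ℝ => Complex.exp (-(Complex.I * k * x)) :=
    Complex.continuous_exp.comp ((continuous_const.mul Complex.continuous_ofReal).neg)
  have hmp : AEStronglyMeasurable (fun x : ℝ => ((Real.sqrt |2 * p x| : ℝ) : ℂ)) volume :=
    (Complex.continuous_ofReal.comp (Real.continuous_sqrt.comp _root_.continuous_abs)
      ).comp_aestronglyMeasurable (aestronglyMeasurable_const.mul hp.1)
  have hmq : AEStronglyMeasurable (fun x : ℝ => ((Real.sqrt |q x| : ℝ) : ℂ)) volume :=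
    (Complex.continuous_ofReal.comp (Real.continuous_sqrt.comp _root_.continuous_abs)
      ).comp_aestronglyMeasurable hq.1
  have hmg₁ : AEStronglyMeasurable g₁ volume :=
    hexp.aestronglyMeasurable.mul (aestronglyMeasurable_const.mul hmp)
  have hmg₂ : AEStronglyMeasurable g₂ volume := hexp.aestronglyMeasurable.mul hmq
  -- exp bound
  have hexp_norm : ∀ x : ℝ, x ∈ Set.Icc 0 γ → ‖Complex.exp (-(Complex.I * k * x))‖ ≤ A := by
    intro x hx
    have h1 : ‖Complex.exp (-(Complex.I * k * x))‖ = Real.exp (k.im * x) := by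
      rw [Complex.norm_exp]
      congr 1
      simp [Complex.mul_re, Complex.mul_im]
    rw [h1, hA]
    apply Real.exp_le_exp.2
    calc k.im * x ≤ max k.im 0 * x := mul_le_mul_of_nonneg_right (le_max_left _ _) hx.1
      _ ≤ max k.im 0 * γ := mul_le_mul_of_nonneg_left hx.2 (le_max_right _ _)
      _ = γ * max k.im 0 := mul_comm _ _
  -- pointwise bounds
  have hb₁ : ∀ x : ℝ, ‖g₁ x‖ ^ 2 ≤ A ^ 2 * ‖k‖ ^ 2 * (2 * |p x|) := by
    intro x
    by_cases hx : x ∈ Set.Icc 0 γ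
    · have hn : ‖g₁ x‖ = ‖Complex.exp (-(Complex.I * k * x))‖ * (‖k‖ * Real.sqrt |2 * p x|) := by
        simp [hg₁, norm_mul, Complex.norm_real, Real.norm_eq_abs,
          _root_.abs_of_nonneg (Real.sqrt_nonneg _)]
      have hs : Real.sqrt |2 * p x| ^ 2 = 2 * |p x| := by
        rw [Real.sq_sqrt (abs_nonneg _), abs_mul]
        norm_num
      have he := hexp_norm x hx
      calc ‖g₁ x‖ ^ 2 = ‖Complex.exp (-(Complex.I * k * x))‖ ^ 2
            * (‖k‖ ^ 2 * Real.sqrt |2 * p x| ^ 2) := by rw [hn]; ring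
        _ ≤ A ^ 2 * (‖k‖ ^ 2 * Real.sqrt |2 * p x| ^ 2) := by
            have := pow_le_pow_left₀ (norm_nonneg _) he 2
            nlinarith [sq_nonneg (‖k‖ * Real.sqrt |2 * p x|), Real.sqrt_nonneg |2 * p x|,
              sq_nonneg ‖k‖]
        _ = A ^ 2 * ‖k‖ ^ 2 * (2 * |p x|) := by rw [hs]; ring
    · have : p x = 0 := hps x hx
      simp [hg₁, this]
  have hb₂ : ∀ x : ℝ, ‖g₂ x‖ ^ 2 ≤ A ^ 2 * |q x| := by
    intro x
    by_cases hx : x ∈ Set.Icc 0 γ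
    · have hn : ‖g₂ x‖ = ‖Complex.exp (-(Complex.I * k * x))‖ * Real.sqrt |q x| := by
        simp [hg₂, norm_mul, Complex.norm_real, Real.norm_eq_abs,
          _root_.abs_of_nonneg (Real.sqrt_nonneg _)]
      have hs : Real.sqrt |q x| ^ 2 = |q x| := Real.sq_sqrt (abs_nonneg _)
      have he := hexp_norm x hx
      calc ‖g₂ x‖ ^ 2 = ‖Complex.exp (-(Complex.I * k * x))‖ ^ 2 * Real.sqrt |q x| ^ 2 := by
            rw [hn]; ring
        _ ≤ A ^ 2 * Real.sqrt |q x| ^ 2 := by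
            have := pow_le_pow_left₀ (norm_nonneg _) he 2
            nlinarith [sq_nonneg (Real.sqrt |q x|)]
        _ = A ^ 2 * |q x| := by rw [hs]
    · have : q x = 0 := hqs x hx
      simp [hg₂, this]
  -- L² membership and integral bounds
  have hC₁ : Integrable (fun x => A ^ 2 * ‖k‖ ^ 2 * (2 * |p x|)) volume :=
    (hp.abs.const_mul (A ^ 2 * ‖k‖ ^ 2 * 2)).congr
      (Filter.Eventually.of_forall fun x => by ring)
  have hC₂ : Integrable (fun x => A ^ 2 * |q x|) volume := hq.abs.const_mul _
  obtain ⟨hL₁, hI₁⟩ := aux_memL2 hC₁ hb₁ hmg₁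
  obtain ⟨hL₂, hI₂⟩ := aux_memL2 hC₂ hb₂ hmg₂
  have hc₁ : (∫ x, A ^ 2 * ‖k‖ ^ 2 * (2 * |p x|)) = A ^ 2 * ‖k‖ ^ 2 * 2 * ∫ x, |p x| := by
    rw [← integral_const_mul]
    congr 1; funext x; ring
  have hc₂ : (∫ x, A ^ 2 * |q x|) = A ^ 2 * ∫ x, |q x| := integral_const_mul _ _
  rw [hc₁] at hI₁; rw [hc₂] at hI₂
  -- split the integral
  have heq : (fun x : ℝ => Complex.exp (-(Complex.I * k * x)) *
        (Complex.I * k * (Real.sqrt |2 * p x| : ℂ) * f₁ x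
          + (Real.sqrt |q x| : ℂ) * f₂ x))
      = fun x => g₁ x * f₁ x + g₂ x * f₂ x := by
    funext x; simp only [hg₁, hg₂]; ring
  rw [heq, integral_add (aux_integrable_mul hL₁ hf₁) (aux_integrable_mul hL₂ hf₂)]
  -- Hölder
  have h₁ := (aux_holder hL₁ hf₁).trans
    (mul_le_mul_of_nonneg_right hI₁ (by positivity))
  have h₂ := (aux_holder hL₂ hf₂).trans
    (mul_le_mul_of_nonneg_right hI₂ (by positivity))
  rw [← aux_sq_eLpNorm hf₁] at h₁
  rw [← aux_sq_eLpNorm hf₂] at h₂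
  set N₁ := (eLpNorm f₁ 2 volume).toReal with hN₁
  set N₂ := (eLpNorm f₂ 2 volume).toReal with hN₂
  set X := ‖∫ x, g₁ x * f₁ x‖ with hX
  set Y := ‖∫ x, g₂ x * f₂ x‖ with hY
  have hP : (0:ℝ) ≤ ∫ x, |p x| := integral_nonneg fun x => abs_nonneg _
  have hQ : (0:ℝ) ≤ ∫ x, |q x| := integral_nonneg fun x => abs_nonneg _
  have hN₁0 : 0 ≤ N₁ := ENNReal.toReal_nonneg
  have hN₂0 : 0 ≤ N₂ := ENNReal.toReal_nonneg
  have hX0 : 0 ≤ X := norm_nonneg _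
  have hY0 : 0 ≤ Y := norm_nonneg _
  have hE : Real.exp (2 * γ * max k.im 0) = A ^ 2 := by
    rw [sq, ← Real.exp_add]; congr 1; ring
  rw [hE]
  have htri : ‖(∫ x, g₁ x * f₁ x) + ∫ x, g₂ x * f₂ x‖ ^ 2 ≤ (X + Y) ^ 2 :=
    pow_le_pow_left₀ (norm_nonneg _) (norm_add_le _ _) 2
  refine htri.trans ?_
  set c₁ := A ^ 2 * ‖k‖ ^ 2 * 2 * ∫ x, |p x| with hcc₁
  set c₂ := A ^ 2 * ∫ x, |q x| with hcc₂
  have hc₁0 : 0 ≤ c₁ := by positivity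
  have hc₂0 : 0 ≤ c₂ := by positivity
  have hgoal : (X + Y) ^ 2 ≤ (c₁ + c₂) * (N₁ ^ 2 + N₂ ^ 2) := by
    nlinarith [mul_le_mul h₁ h₂ (by positivity) (by positivity),
      sq_nonneg (c₁ * N₂ ^ 2 - c₂ * N₁ ^ 2), mul_nonneg hX0 hY0,
      mul_nonneg (mul_nonneg hc₁0 (sq_nonneg N₂)) (mul_nonneg hc₂0 (sq_nonneg N₁)),
      sq_nonneg (X * Y), mul_nonneg hc₁0 (sq_nonneg N₂), mul_nonneg hc₂0 (sq_nonneg N₁)]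
  refine hgoal.trans (le_of_eq ?_)
  simp only [hcc₁, hcc₂]
  ring
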